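/- Let G be an n-sun (n ≥ 3) whose inner vertices induce a cycle: the vertex set is U ∪ W with U = {u_1, …, u_n} inducing the cycle C_n (u_i adjacent to u_{i+1}, indices modulo n), W = {w_1, …, w_n} an independent set, and w_i adjacent exactly to the two consecutive cycle vertices u_i and u_{i+1} (indices modulo n). Then for every integer r with 1 ≤ r < ⌊n/2⌋, the clique number of the r-th power is ω(G^r) = 2r + 1; and for every integer r ≥ ⌊n/2⌋ + 1, G^r is the complete graph on 2n vertices, so ω(G^r) = 2n. -/
import Mathlib

/-- The `r`-th power of a simple graph `G`: two distinct vertices are adjacent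
iff their distance in `G` is at most `r` (in particular they are connected in `G`). -/
def SimpleGraph.power {V : Type*} (G : SimpleGraph V) (r : ℕ) : SimpleGraph V :=
  SimpleGraph.fromRel (fun u v => G.Reachable u v ∧ G.dist u v ≤ r)

/-- The `n`-sun whose inner vertices induce a cycle: the inner vertices
`Sum.inl i` form the cycle `C_n` (`u_i` adjacent to `u_{i+1}`, indices mod `n`),
the outer vertices `Sum.inr i` form an independent set, and the outer vertex
`w_i` is adjacent exactly to `u_i` and `u_{i+1}`. -/
def cycleSunGraph (n : ℕ) : SimpleGraph (ZMod n ⊕ ZMod n) :=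
  SimpleGraph.fromRel (fun a b =>
    match a, b with
    | Sum.inl i, Sum.inl j => j = i + 1
    | Sum.inr i, Sum.inl j => j = i ∨ j = i + 1
    | _, _ => False)

open SimpleGraph Sum Finset

/-- circular distance on `ZMod m` -/
def cdist (m : ℕ) (x : ZMod m) : ℕ := min x.val (m - x.val)

section cd
variable {m : ℕ} [NeZero m]

lemma mod_two_cases (c m : ℕ) (h : c < 2*m) (h0 : 0 < m) :
    c % m = if c < m then c else c - m := by
  split
  · exact Nat.mod_eq_of_lt ‹_›
  · rw [Nat.mod_eq_sub_mod (le_of_not_gt ‹_›), Nat.mod_eq_of_lt (by omega)]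

lemma val_sub' (x y : ZMod m) : (x - y).val = (x.val + (m - y.val)) % m := by
  have hy : y.val ≤ m := le_of_lt (ZMod.val_lt y)
  conv_lhs => rw [← ZMod.natCast_zmod_val x, ← ZMod.natCast_zmod_val y]
  have : (x.val : ZMod m) - (y.val : ZMod m) = ((x.val + (m - y.val) : ℕ) : ZMod m) := by
    push_cast [Nat.cast_sub hy]
    rw [ZMod.natCast_self]
    ring
  rw [this, ZMod.val_natCast]

lemma val_sub_formula (x y : ZMod m) :
    (x - y).val = if y.val ≤ x.val then x.val - y.val else x.val + m - y.val := by
  have hx := ZMod.val_lt x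
  have hy := ZMod.val_lt y
  rw [val_sub', mod_two_cases _ _ (by omega) (by omega)]
  split <;> split <;> omega

lemma cdist_le_val (x : ZMod m) : cdist m x ≤ x.val := min_le_left _ _

lemma cdist_neg (x : ZMod m) : cdist m (-x) = cdist m x := by
  rcases eq_or_ne x 0 with rfl | hne
  · simp
  · have hx := ZMod.val_lt x
    have hx0 : x.val ≠ 0 := fun h => hne (ZMod.val_eq_zero x |>.mp h)
    have h : (-x).val = ((0:ZMod m).val + (m - x.val)) % m := by
      rw [← zero_sub, val_sub']
    rw [ZMod.val_zero, zero_add, Nat.mod_eq_of_lt (by omega)] at h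
    unfold cdist
    omega

lemma cdist_add_le (x y : ZMod m) : cdist m (x + y) ≤ cdist m x + cdist m y := by
  have hx := ZMod.val_lt x
  have hy := ZMod.val_lt y
  have h : (x + y).val = (x.val + y.val) % m := ZMod.val_add x y
  rw [mod_two_cases _ _ (by omega) (by omega)] at h
  unfold cdist
  split at h <;> omega

end cd
section circ

lemma cast_inj_of_lt {m : ℕ} [NeZero m] {a b : ℕ} (ha : a < m) (hb : b < m)
    (h : (a : ZMod m) = (b : ZMod m)) : a = b := by
  have := congrArg ZMod.val h
  rwa [ZMod.val_natCast, ZMod.val_natCast, Nat.mod_eq_of_lt ha, Nat.mod_eq_of_lt hb] at this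

/-- A subset of `ZMod m` with pairwise circular distance at most `t`,
where `m ≥ 2t+2`, has at most `t+1` elements. -/
lemma circ_card_le (t : ℕ) : ∀ m, 2*t+2 ≤ m → ∀ S : Finset (ZMod m),
    (∀ x ∈ S, ∀ y ∈ S, x ≠ y → cdist m (x - y) ≤ t) → S.card ≤ t + 1 := by
  intro m
  induction m using Nat.strong_induction_on with
  | _ m ih =>
  intro hm S hS
  haveI : NeZero m := ⟨by omega⟩
  classical
  have hval : ∀ x ∈ S, ∀ y ∈ S, x ≠ y → (x - y).val ≤ t ∨ m - (x - y).val ≤ t := by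
    intro x hx y hy hxy
    have := hS x hx y hy hxy
    unfold cdist at this
    omega
  rcases eq_or_lt_of_le hm with hm2 | hm2
  · -- base case m = 2t+2 : pigeonhole on antipodal classes
    have claim : ∀ x ∈ S, ∀ y ∈ S, y.val < x.val → x.val % (t+1) = y.val % (t+1) → False := by
      intro x hx y hy hlt hfe
      have hxm := ZMod.val_lt x
      have hym := ZMod.val_lt y
      have hxy : x ≠ y := by
        intro h; rw [h] at hlt; omega
      have hdvd : (t+1) ∣ x.val - y.val :=
        (Nat.modEq_iff_dvd' (le_of_lt hlt)).mp hfe.symm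
      obtain ⟨k, hk⟩ := hdvd
      have hk2 : (t+1) * k ≤ (t+1) * 2 → k ≤ 2 := by
        intro h; exact Nat.le_of_mul_le_mul_left h (by omega)
      have hkk : k = 1 := by
        rcases Nat.lt_or_ge k 2 with h2 | h2
        · interval_cases k <;> omega
        · have := Nat.mul_le_mul_left (t+1) h2
          omega
      subst hkk
      have hsub : x - y = ((x.val - y.val : ℕ) : ZMod m) := by
        conv_lhs => rw [← ZMod.natCast_zmod_val x, ← ZMod.natCast_zmod_val y]
        rw [← Nat.cast_sub (le_of_lt hlt)]
      have hv : (x - y).val = t+1 := by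
        rw [hsub, ZMod.val_natCast, Nat.mod_eq_of_lt (by omega)]
        omega
      have := hval x hx y hy hxy
      omega
    have hinj : Set.InjOn (fun x : ZMod m => x.val % (t+1)) S := by
      intro x hx y hy hfe
      simp only at hfe
      rcases lt_trichotomy y.val x.val with h | h | h
      · exact absurd (claim x hx y hy h hfe) (by simp)
      · rw [← ZMod.natCast_zmod_val x, ← ZMod.natCast_zmod_val y, h]
      · exact absurd (claim y hy x hx h hfe.symm) (by simp)
    calc S.card = (S.image (fun x : ZMod m => x.val % (t+1))).card :=
          (Finset.card_image_of_injOn hinj).symm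
      _ ≤ (Finset.range (t+1)).card := by
          apply Finset.card_le_card
          intro v hv
          obtain ⟨x, _, rfl⟩ := Finset.mem_image.mp hv
          exact Finset.mem_range.mpr (Nat.mod_lt _ (by omega))
      _ = t + 1 := Finset.card_range _
  · -- inductive case m > 2t+2 : contract the circle at a free point
    rcases S.eq_empty_or_nonempty with rfl | ⟨x₀, hx₀⟩
    · simp
    have hcrude : S.card ≤ 2*t+1 := by
      have hinj : Set.InjOn (fun x : ZMod m => (x - x₀).val) S := by
        intro x hx y hy h
        simp only at h
        have : x - x₀ = y - x₀ := by
          rw [← ZMod.natCast_zmod_val (x - x₀), ← ZMod.natCast_zmod_val (y - x₀), h]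
        exact sub_left_inj.mp this
      calc S.card = (S.image (fun x : ZMod m => (x - x₀).val)).card :=
            (Finset.card_image_of_injOn hinj).symm
        _ ≤ (Finset.range (t+1) ∪ Finset.Ico (m-t) m).card := by
            apply Finset.card_le_card
            intro v hv
            obtain ⟨x, hx, rfl⟩ := Finset.mem_image.mp hv
            rcases eq_or_ne x x₀ with rfl | hne
            · simp
            · have h1 := hval x hx x₀ hx₀ hne
              have h2 := ZMod.val_lt (x - x₀)
              rcases h1 with h1 | h1
              · exact Finset.mem_union_left _ (Finset.mem_range.mpr (by omega))
              · exact Finset.mem_union_right _ (Finset.mem_Ico.mpr (by omega))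
        _ ≤ (Finset.range (t+1)).card + (Finset.Ico (m-t) m).card := Finset.card_union_le _ _
        _ ≤ 2*t+1 := by rw [Finset.card_range, Nat.card_Ico]; omega
    have hz : ∃ z : ZMod m, z ∉ S := by
      by_contra h
      push_neg at h
      have := Finset.card_univ (α := ZMod m) ▸ Finset.card_le_card
        (Finset.eq_univ_iff_forall.mpr h).ge
      rw [ZMod.card] at this
      omega
    obtain ⟨z, hz⟩ := hz
    haveI : NeZero (m-1) := ⟨by omega⟩
    set f : ZMod m → ZMod (m-1) := fun x => (((x - z).val - 1 : ℕ) : ZMod (m-1)) with hf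
    have hbase : ∀ x ∈ S, 1 ≤ (x - z).val ∧ (x - z).val ≤ m - 1 := by
      intro x hx
      have h1 : x - z ≠ 0 := sub_ne_zero.mpr (fun h => hz (h ▸ hx))
      have h2 : (x - z).val ≠ 0 := fun h => h1 ((ZMod.val_eq_zero _).mp h)
      have := ZMod.val_lt (x - z)
      omega
    have hdiff : ∀ x ∈ S, ∀ y ∈ S, (y - z).val < (x - z).val →
        (x - y).val = (x - z).val - (y - z).val ∧
        (f x - f y).val = (x - z).val - (y - z).val := by
      intro x hx y hy hlt
      obtain ⟨hb1, hb2⟩ := hbase y hy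
      obtain ⟨ha1, ha2⟩ := hbase x hx
      constructor
      · have hsub : x - y = (((x-z).val - (y-z).val : ℕ) : ZMod m) := by
          have h0 : x - y = (x - z) - (y - z) := by ring
          rw [h0]
          conv_lhs => rw [← ZMod.natCast_zmod_val (x-z), ← ZMod.natCast_zmod_val (y-z)]
          rw [← Nat.cast_sub (le_of_lt hlt)]
        rw [hsub, ZMod.val_natCast, Nat.mod_eq_of_lt (by omega)]
      · have hsub : f x - f y = (((x-z).val - (y-z).val : ℕ) : ZMod (m-1)) := by
          rw [hf]
          simp only
          rw [← Nat.cast_sub (by omega)]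
          congr 1
          omega
        rw [hsub, ZMod.val_natCast, Nat.mod_eq_of_lt (by omega)]
    have hinj : Set.InjOn f S := by
      intro x hx y hy hfe
      by_contra hxy
      rcases lt_trichotomy ((y - z).val) ((x - z).val) with h | h | h
      · have := (hdiff x hx y hy h).2
        rw [hfe, sub_self, ZMod.val_zero] at this
        omega
      · have : x - z = y - z := by
          rw [← ZMod.natCast_zmod_val (x-z), ← ZMod.natCast_zmod_val (y-z), h]
        exact hxy (sub_left_inj.mp this)
      · have := (hdiff y hy x hx h).2
        rw [← hfe, sub_self, ZMod.val_zero] at this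
        omega
    have main : ∀ x ∈ S, ∀ y ∈ S, (y - z).val < (x - z).val →
        cdist (m-1) (f x - f y) ≤ t := by
      intro x hx y hy hlt
      have hxy : x ≠ y := by
        intro h; rw [h] at hlt; omega
      obtain ⟨h1, h2⟩ := hdiff x hx y hy hlt
      have h3 := hval x hx y hy hxy
      obtain ⟨hb1, hb2⟩ := hbase y hy
      obtain ⟨ha1, ha2⟩ := hbase x hx
      unfold cdist
      omega
    have := ih (m-1) (by omega) (by omega) (S.image f) ?_
    · rwa [Finset.card_image_of_injOn hinj] at this
    · intro u hu v hv huv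
      obtain ⟨x, hx, rfl⟩ := Finset.mem_image.mp hu
      obtain ⟨y, hy, rfl⟩ := Finset.mem_image.mp hv
      rcases lt_trichotomy ((y - z).val) ((x - z).val) with h | h | h
      · exact main x hx y hy h
      · have hxz : x - z = y - z := by
          have := congrArg (fun v : ℕ => (v : ZMod m)) h
          simpa [ZMod.natCast_zmod_val] using this.symm
        exact absurd (congrArg f (sub_left_inj.mp hxz)) huv
      · rw [← neg_sub, cdist_neg]
        exact main y hy x hx h

end circ
section sun

open SimpleGraph

variable {n : ℕ}

lemma power_adj {V' : Type*} {G : SimpleGraph V'} {r : ℕ} {a b : V'} :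
    (G.power r).Adj a b ↔ a ≠ b ∧ G.Reachable a b ∧ G.dist a b ≤ r := by
  rw [SimpleGraph.power, SimpleGraph.fromRel_adj]
  constructor
  · rintro ⟨hne, h | h⟩
    · exact ⟨hne, h⟩
    · exact ⟨hne, h.1.symm, (SimpleGraph.dist_comm .. ▸ h.2)⟩
  · rintro ⟨hne, hr, hd⟩
    exact ⟨hne, Or.inl ⟨hr, hd⟩⟩

lemma sun_adj_uu (hn : 2 ≤ n) (i : ZMod n) :
    (cycleSunGraph n).Adj (Sum.inl i) (Sum.inl (i+1)) := by
  rw [cycleSunGraph, SimpleGraph.fromRel_adj]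
  haveI : Fact (1 < n) := ⟨by omega⟩
  refine ⟨fun h => ?_, Or.inl rfl⟩
  have h2 : i = i + 1 := Sum.inl.inj h
  exact one_ne_zero (left_eq_add.mp h2)

lemma sun_adj_wu (i : ZMod n) :
    (cycleSunGraph n).Adj (Sum.inr i) (Sum.inl i) := by
  rw [cycleSunGraph, SimpleGraph.fromRel_adj]
  exact ⟨Sum.inr_ne_inl, Or.inl (Or.inl rfl)⟩

lemma sun_adj_wu1 (i : ZMod n) :
    (cycleSunGraph n).Adj (Sum.inr i) (Sum.inl (i+1)) := by
  rw [cycleSunGraph, SimpleGraph.fromRel_adj]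
  exact ⟨Sum.inr_ne_inl, Or.inl (Or.inr rfl)⟩

lemma exists_walk_cycle (hn : 2 ≤ n) (k : ℕ) : ∀ i : ZMod n,
    ∃ p : (cycleSunGraph n).Walk (Sum.inl i) (Sum.inl (i + (k:ℕ))),
      p.length = k := by
  induction k with
  | zero =>
    intro i
    refine ⟨SimpleGraph.Walk.nil.copy rfl (congrArg Sum.inl ?_), by simp⟩
    push_cast; ring
  | succ k ih =>
    intro i
    obtain ⟨p, hp⟩ := ih (i+1)
    refine ⟨(SimpleGraph.Walk.cons (sun_adj_uu hn i) p).copy rfl (congrArg Sum.inl ?_), ?_⟩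
    · push_cast; ring
    · simp [hp]

variable [NeZero n]

lemma walk_uu (hn : 2 ≤ n) (i j : ZMod n) :
    ∃ p : (cycleSunGraph n).Walk (Sum.inl i) (Sum.inl j), p.length = (j - i).val := by
  obtain ⟨p, hp⟩ := exists_walk_cycle hn ((j - i).val) i
  have h : i + (((j - i).val : ℕ) : ZMod n) = j := by
    rw [ZMod.natCast_zmod_val]; ring
  exact ⟨p.copy rfl (congrArg Sum.inl h), by simp [hp]⟩

lemma walk_uw (hn : 2 ≤ n) (i j : ZMod n) :
    ∃ p : (cycleSunGraph n).Walk (Sum.inl i) (Sum.inr j), p.length = (j - i).val + 1 := by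
  obtain ⟨p, hp⟩ := walk_uu hn i j
  exact ⟨p.concat (sun_adj_wu j).symm, by simp [hp]⟩

lemma walk_uw' (hn : 2 ≤ n) (i j : ZMod n) :
    ∃ p : (cycleSunGraph n).Walk (Sum.inl i) (Sum.inr j), p.length = (j + 1 - i).val + 1 := by
  obtain ⟨p, hp⟩ := walk_uu hn i (j+1)
  exact ⟨p.concat (sun_adj_wu1 j).symm, by simp [hp]⟩

lemma walk_wu (hn : 2 ≤ n) (i j : ZMod n) :
    ∃ p : (cycleSunGraph n).Walk (Sum.inr i) (Sum.inl j), p.length = (j - i - 1).val + 1 := by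
  obtain ⟨p, hp⟩ := walk_uu hn (i+1) j
  have he : j - (i + 1) = j - i - 1 := by ring
  rw [he] at hp
  exact ⟨SimpleGraph.Walk.cons (sun_adj_wu1 i) p, by simp [hp]⟩

lemma walk_wu2 (hn : 2 ≤ n) (i j : ZMod n) :
    ∃ p : (cycleSunGraph n).Walk (Sum.inr i) (Sum.inl j), p.length = (j - i).val + 1 := by
  obtain ⟨p, hp⟩ := walk_uu hn i j
  exact ⟨SimpleGraph.Walk.cons (sun_adj_wu i) p, by simp [hp]⟩

lemma walk_ww (hn : 2 ≤ n) (i j : ZMod n) :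
    ∃ p : (cycleSunGraph n).Walk (Sum.inr i) (Sum.inr j), p.length = (j - i - 1).val + 2 := by
  obtain ⟨p, hp⟩ := walk_uw hn (i+1) j
  have he : j - (i + 1) = j - i - 1 := by ring
  rw [he] at hp
  exact ⟨SimpleGraph.Walk.cons (sun_adj_wu1 i) p, by simp [hp]⟩

lemma walk_ww' (hn : 2 ≤ n) (i j : ZMod n) :
    ∃ p : (cycleSunGraph n).Walk (Sum.inr i) (Sum.inr j), p.length = (j - i + 1).val + 2 := by
  obtain ⟨p, hp⟩ := walk_uw' hn i j
  have he : j + 1 - i = j - i + 1 := by ring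
  rw [he] at hp
  exact ⟨SimpleGraph.Walk.cons (sun_adj_wu i) p, by simp [hp]⟩

lemma sun_reach (hn : 2 ≤ n) (a b : ZMod n ⊕ ZMod n) :
    (cycleSunGraph n).Reachable a b := by
  rcases a with i | i <;> rcases b with j | j
  · exact ⟨(walk_uu hn i j).choose⟩
  · exact ⟨(walk_uw hn i j).choose⟩
  · exact ⟨(walk_wu hn i j).choose⟩
  · exact ⟨(walk_ww hn i j).choose⟩

end sun
section upper

open SimpleGraph

variable {n : ℕ} [NeZero n]

/-- position map into the double circle -/
def sunPos (n : ℕ) : (ZMod n ⊕ ZMod n) → ZMod (2*n) :=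
  Sum.elim (fun i => ((2 * i.val : ℕ) : ZMod (2*n)))
    (fun i => ((2 * i.val + 1 : ℕ) : ZMod (2*n)))

lemma sunPos_inl_succ (i : ZMod n) :
    sunPos n (Sum.inl (i+1)) = sunPos n (Sum.inl i) + 2 := by
  have hi := ZMod.val_lt i
  have h1 : (i + 1 : ZMod n) = ((i.val + 1 : ℕ) : ZMod n) := by
    push_cast [ZMod.natCast_zmod_val]; ring
  have h2 : (i+1).val = (i.val + 1) % n := by rw [h1, ZMod.val_natCast]
  simp only [sunPos, Sum.elim_inl]
  rcases Nat.lt_or_ge (i.val + 1) n with h | h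
  · rw [h2, Nat.mod_eq_of_lt h]
    push_cast; ring
  · have hn : i.val + 1 = n := by omega
    rw [h2, hn, Nat.mod_self]
    have h3 : ((2 * i.val : ℕ) : ZMod (2*n)) + 2 = ((2 * i.val + 2 : ℕ) : ZMod (2*n)) := by
      push_cast; ring
    rw [h3]
    have h4 : 2 * i.val + 2 = 2 * n := by omega
    rw [h4]
    simp [ZMod.natCast_self]

lemma val_two {m : ℕ} (hm : 2 < m) : (2 : ZMod m).val = 2 := by
  haveI : NeZero m := ⟨by omega⟩
  have : (2 : ZMod m) = ((2:ℕ) : ZMod m) := by norm_cast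
  rw [this, ZMod.val_natCast, Nat.mod_eq_of_lt hm]

lemma val_one' {m : ℕ} (hm : 1 < m) : (1 : ZMod m).val = 1 := by
  haveI : NeZero m := ⟨by omega⟩
  have : (1 : ZMod m) = ((1:ℕ) : ZMod m) := by norm_cast
  rw [this, ZMod.val_natCast, Nat.mod_eq_of_lt hm]

lemma cdist_two {m : ℕ} (hm : 4 ≤ m) : cdist m 2 = 2 := by
  unfold cdist; rw [val_two (by omega)]; omega

lemma cdist_one {m : ℕ} (hm : 2 ≤ m) : cdist m 1 = 1 := by
  unfold cdist; rw [val_one' (by omega)]; omega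

lemma sunPos_adj (hn : 3 ≤ n) {a b : ZMod n ⊕ ZMod n} (h : (cycleSunGraph n).Adj a b) :
    cdist (2*n) (sunPos n a - sunPos n b) ≤ 2 := by
  haveI : NeZero (2*n) := ⟨by omega⟩
  rw [cycleSunGraph, SimpleGraph.fromRel_adj] at h
  obtain ⟨hne, h⟩ := h
  have c2 : cdist (2*n) 2 = 2 := cdist_two (by omega)
  have c1 : cdist (2*n) 1 = 1 := cdist_one (by omega)
  rcases a with i | i <;> rcases b with j | j
  · replace h : (j = i + 1) ∨ (i = j + 1) := h
    rcases h with rfl | rfl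
    · have he : sunPos n (Sum.inl i) - sunPos n (Sum.inl (i+1)) = -2 := by
        rw [sunPos_inl_succ]; ring
      rw [he, show (-2 : ZMod (2*n)) = -(2:ZMod (2*n)) by ring, cdist_neg, c2]
    · have he : sunPos n (Sum.inl (j+1)) - sunPos n (Sum.inl j) = 2 := by
        rw [sunPos_inl_succ]; ring
      rw [he, c2]
  · replace h : False ∨ (i = j ∨ i = j + 1) := h
    have hwj : sunPos n (Sum.inr j) = sunPos n (Sum.inl j) + 1 := by
      simp only [sunPos, Sum.elim_inl, Sum.elim_inr]; push_cast; ring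
    rcases h with h | h | rfl
    · exact absurd h (by simp)
    · subst h
      have he : sunPos n (Sum.inl i) - sunPos n (Sum.inr i) = -1 := by rw [hwj]; ring
      rw [he, show (-1 : ZMod (2*n)) = -(1:ZMod (2*n)) by ring, cdist_neg, c1]; omega
    · have he : sunPos n (Sum.inl (j+1)) - sunPos n (Sum.inr j) = 1 := by
        rw [hwj, sunPos_inl_succ]; ring
      rw [he, c1]; omega
  · replace h : (j = i ∨ j = i + 1) ∨ False := h
    rcases h with (rfl | rfl) | h
    · have he : sunPos n (Sum.inr j) - sunPos n (Sum.inl j) = 1 := by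
        simp only [sunPos, Sum.elim_inl, Sum.elim_inr]; push_cast; ring
      rw [he, c1]; omega
    · have hwi : sunPos n (Sum.inr i) = sunPos n (Sum.inl i) + 1 := by
        simp only [sunPos, Sum.elim_inl, Sum.elim_inr]; push_cast; ring
      have he : sunPos n (Sum.inr i) - sunPos n (Sum.inl (i+1)) = -1 := by
        rw [hwi, sunPos_inl_succ]; ring
      rw [he, show (-1 : ZMod (2*n)) = -(1:ZMod (2*n)) by ring, cdist_neg, c1]; omega
    · exact absurd h (by simp)
  · replace h : False ∨ False := h
    exact absurd h (by simp)

lemma sunPos_walk (hn : 3 ≤ n) {a b : ZMod n ⊕ ZMod n}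
    (p : (cycleSunGraph n).Walk a b) :
    cdist (2*n) (sunPos n a - sunPos n b) ≤ 2 * p.length := by
  haveI : NeZero (2*n) := ⟨by omega⟩
  induction p with
  | nil => simp [cdist]
  | @cons u v w h q ih =>
    have h1 := sunPos_adj hn h
    have h2 : sunPos n u - sunPos n w =
        (sunPos n u - sunPos n v) + (sunPos n v - sunPos n w) := by ring
    have h3 := cdist_add_le (m := 2*n) (sunPos n u - sunPos n v) (sunPos n v - sunPos n w)
    rw [← h2] at h3
    simp only [SimpleGraph.Walk.length_cons]
    omega

lemma sunPos_injective (hn : 3 ≤ n) : Function.Injective (sunPos n) := by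
  haveI : NeZero (2*n) := ⟨by omega⟩
  intro a b h
  rcases a with i | i <;> rcases b with j | j <;>
      simp only [sunPos, Sum.elim_inl, Sum.elim_inr] at h <;>
      have hi' := ZMod.val_lt i <;> have hj' := ZMod.val_lt j <;>
      have := cast_inj_of_lt (m := 2*n) (by omega) (by omega) h
  · have hv : i.val = j.val := by omega
    rw [← ZMod.natCast_zmod_val i, ← ZMod.natCast_zmod_val j, hv]
  · omega
  · omega
  · have hv : i.val = j.val := by omega
    rw [← ZMod.natCast_zmod_val i, ← ZMod.natCast_zmod_val j, hv]

lemma clique_card_le (hn : 3 ≤ n) {r : ℕ} (hr2 : r < n/2)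
    {s : Finset (ZMod n ⊕ ZMod n)} (hs : ((cycleSunGraph n).power r).IsClique s) :
    s.card ≤ 2*r + 1 := by
  haveI : NeZero (2*n) := ⟨by omega⟩
  have key : ∀ x ∈ s, ∀ y ∈ s, x ≠ y →
      cdist (2*n) (sunPos n x - sunPos n y) ≤ 2*r := by
    intro x hx y hy hxy
    have hadj := hs (Finset.mem_coe.mpr hx) (Finset.mem_coe.mpr hy) hxy
    rw [power_adj] at hadj
    obtain ⟨-, hreach, hdist⟩ := hadj
    obtain ⟨p, hp⟩ := hreach.exists_walk_length_eq_dist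
    have := sunPos_walk hn p
    omega
  have hmain := circ_card_le (2*r) (2*n) (by omega) (s.image (sunPos n)) ?_
  · rwa [Finset.card_image_of_injective _ (sunPos_injective hn)] at hmain
  · intro u hu v hv huv
    obtain ⟨x, hx, rfl⟩ := Finset.mem_image.mp hu
    obtain ⟨y, hy, rfl⟩ := Finset.mem_image.mp hv
    exact key x hx y hy (fun h => huv (congrArg _ h))

end upper
section lower

open SimpleGraph

variable {n : ℕ} [NeZero n]

lemma val_cast_sub {x y : ℕ} (hy : y < n) (hxy : x ≤ y) :
    ((y : ZMod n) - (x : ℕ)).val = y - x := by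
  rw [← Nat.cast_sub hxy, ZMod.val_natCast, Nat.mod_eq_of_lt (by omega)]

lemma clique_lower (hn : 3 ≤ n) {r : ℕ} (hr1 : 1 ≤ r) (hr2 : r < n/2) :
    ∃ s : Finset (ZMod n ⊕ ZMod n), ((cycleSunGraph n).power r).IsNClique (2*r+1) s := by
  classical
  have hn2 : 2 ≤ n := by omega
  have hrn : r + 1 < n := by omega
  refine ⟨((Finset.range (r+1)).image fun k : ℕ => (Sum.inl (k:ZMod n) : ZMod n ⊕ ZMod n)) ∪
      ((Finset.range r).image fun k : ℕ => (Sum.inr (k:ZMod n) : ZMod n ⊕ ZMod n)), ?_, ?_⟩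
  · -- clique
    intro a ha b hb hne
    rw [Finset.coe_union, Set.mem_union] at ha hb
    rw [power_adj]
    refine ⟨hne, sun_reach hn2 a b, ?_⟩
    rcases ha with ha | ha <;> rcases hb with hb | hb <;>
      simp only [Finset.coe_image, Set.mem_image, Finset.mem_coe, Finset.mem_range] at ha hb <;>
      obtain ⟨x, hx, rfl⟩ := ha <;> obtain ⟨y, hy, rfl⟩ := hb
    · -- inl inl
      rcases le_or_gt x y with hxy | hxy
      · obtain ⟨p, hp⟩ := walk_uu hn2 (x : ZMod n) (y : ZMod n)
        have hd := SimpleGraph.dist_le p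
        rw [hp, val_cast_sub (by omega) hxy] at hd
        omega
      · rw [SimpleGraph.dist_comm]
        obtain ⟨p, hp⟩ := walk_uu hn2 (y : ZMod n) (x : ZMod n)
        have hd := SimpleGraph.dist_le p
        rw [hp, val_cast_sub (by omega) (by omega)] at hd
        omega
    · -- inl inr
      rcases le_or_gt x y with hxy | hxy
      · obtain ⟨p, hp⟩ := walk_uw hn2 (x : ZMod n) (y : ZMod n)
        have hd := SimpleGraph.dist_le p
        rw [hp, val_cast_sub (by omega) hxy] at hd
        omega
      · rw [SimpleGraph.dist_comm]
        obtain ⟨p, hp⟩ := walk_wu hn2 (y : ZMod n) (x : ZMod n)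
        have hd := SimpleGraph.dist_le p
        have he : (x : ZMod n) - (y:ℕ) - 1 = ((x:ℕ):ZMod n) - ((y+1 : ℕ) : ZMod n) := by
          push_cast; ring
        rw [hp, he, val_cast_sub (by omega) (by omega)] at hd
        omega
    · -- inr inl
      rcases le_or_gt y x with hxy | hxy
      · rw [SimpleGraph.dist_comm]
        obtain ⟨p, hp⟩ := walk_uw hn2 (y : ZMod n) (x : ZMod n)
        have hd := SimpleGraph.dist_le p
        rw [hp, val_cast_sub (by omega) hxy] at hd
        omega
      · obtain ⟨p, hp⟩ := walk_wu hn2 (x : ZMod n) (y : ZMod n)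
        have hd := SimpleGraph.dist_le p
        have he : (y : ZMod n) - (x:ℕ) - 1 = ((y:ℕ):ZMod n) - ((x+1 : ℕ) : ZMod n) := by
          push_cast; ring
        rw [hp, he, val_cast_sub (by omega) (by omega)] at hd
        omega
    · -- inr inr
      have hxyne : x ≠ y := by
        intro h; exact hne (by rw [h])
      rcases lt_or_gt_of_ne hxyne with hxy | hxy
      · obtain ⟨p, hp⟩ := walk_ww hn2 (x : ZMod n) (y : ZMod n)
        have hd := SimpleGraph.dist_le p
        have he : (y : ZMod n) - (x:ℕ) - 1 = ((y:ℕ):ZMod n) - ((x+1 : ℕ) : ZMod n) := by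
          push_cast; ring
        rw [hp, he, val_cast_sub (by omega) (by omega)] at hd
        omega
      · rw [SimpleGraph.dist_comm]
        obtain ⟨p, hp⟩ := walk_ww hn2 (y : ZMod n) (x : ZMod n)
        have hd := SimpleGraph.dist_le p
        have he : (x : ZMod n) - (y:ℕ) - 1 = ((x:ℕ):ZMod n) - ((y+1 : ℕ) : ZMod n) := by
          push_cast; ring
        rw [hp, he, val_cast_sub (by omega) (by omega)] at hd
        omega
  · -- cardinality
    have hinj1 : Set.InjOn (fun k : ℕ => (Sum.inl (k:ZMod n) : ZMod n ⊕ ZMod n))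
        (Finset.range (r+1)) := by
      intro a ha b hb hab
      simp only [Finset.coe_range, Set.mem_Iio] at ha hb
      exact cast_inj_of_lt (by omega) (by omega) (Sum.inl.inj hab)
    have hinj2 : Set.InjOn (fun k : ℕ => (Sum.inr (k:ZMod n) : ZMod n ⊕ ZMod n))
        (Finset.range r) := by
      intro a ha b hb hab
      simp only [Finset.coe_range, Set.mem_Iio] at ha hb
      exact cast_inj_of_lt (by omega) (by omega) (Sum.inr.inj hab)
    have hdisj : Disjoint
        ((Finset.range (r+1)).image fun k : ℕ => (Sum.inl (k:ZMod n) : ZMod n ⊕ ZMod n))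
        ((Finset.range r).image fun k : ℕ => (Sum.inr (k:ZMod n) : ZMod n ⊕ ZMod n)) := by
      rw [Finset.disjoint_left]
      rintro a ha hb
      obtain ⟨x, -, rfl⟩ := Finset.mem_image.mp ha
      obtain ⟨y, -, h⟩ := Finset.mem_image.mp hb
      exact Sum.inl_ne_inr h.symm
    rw [Finset.card_union_of_disjoint hdisj, Finset.card_image_of_injOn hinj1,
      Finset.card_image_of_injOn hinj2, Finset.card_range, Finset.card_range]
    omega

end lower
section top

open SimpleGraph

variable {n : ℕ} [NeZero n]

lemma val_neg_of_ne {x : ZMod n} (h : x ≠ 0) : (-x).val = n - x.val := by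
  have hx := ZMod.val_lt x
  have hx0 : x.val ≠ 0 := fun h' => h ((ZMod.val_eq_zero x).mp h')
  have he : (-x).val = ((0:ZMod n).val + (n - x.val)) % n := by
    rw [← zero_sub, val_sub']
  rwa [ZMod.val_zero, zero_add, Nat.mod_eq_of_lt (by omega)] at he

lemma val_pos_of_ne {x : ZMod n} (h : x ≠ 0) : 1 ≤ x.val := by
  have hx0 : x.val ≠ 0 := fun h' => h ((ZMod.val_eq_zero x).mp h')
  omega

lemma val_sub_one {x : ZMod n} (hx : x ≠ 0) : (x - 1).val = x.val - 1 := by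
  have hx1 : 1 ≤ x.val := val_pos_of_ne hx
  have hx2 := ZMod.val_lt x
  have he : x - 1 = ((x.val - 1 : ℕ) : ZMod n) := by
    conv_lhs => rw [← ZMod.natCast_zmod_val x]
    rw [← Nat.cast_one, ← Nat.cast_sub hx1]
  rw [he, ZMod.val_natCast, Nat.mod_eq_of_lt (by omega)]

lemma power_top (hn : 3 ≤ n) {r : ℕ} (hr : n/2 + 1 ≤ r) :
    (cycleSunGraph n).power r = ⊤ := by
  have hn2 : 2 ≤ n := by omega
  ext a b
  rw [power_adj, SimpleGraph.top_adj]
  constructor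
  · exact fun h => h.1
  · intro hne
    refine ⟨hne, sun_reach hn2 a b, ?_⟩
    rcases a with i | i <;> rcases b with j | j
    · -- u u
      have hij : j - i ≠ 0 := sub_ne_zero.mpr (fun h => hne (by rw [h]))
      have hv := ZMod.val_lt (j - i)
      have hv1 := val_pos_of_ne hij
      rcases le_or_gt ((j - i).val) (n/2) with h | h
      · obtain ⟨p, hp⟩ := walk_uu hn2 i j
        have hd := SimpleGraph.dist_le p
        omega
      · rw [SimpleGraph.dist_comm]
        obtain ⟨p, hp⟩ := walk_uu hn2 j i
        have hd := SimpleGraph.dist_le p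
        have he : i - j = -(j - i) := by ring
        rw [he, val_neg_of_ne hij] at hp
        omega
    · -- u w
      have hv := ZMod.val_lt (j - i)
      rcases le_or_gt ((j - i).val) (n/2) with h | h
      · obtain ⟨p, hp⟩ := walk_uw hn2 i j
        have hd := SimpleGraph.dist_le p
        omega
      · rw [SimpleGraph.dist_comm]
        obtain ⟨p, hp⟩ := walk_wu hn2 j i
        have hd := SimpleGraph.dist_le p
        have he : j - i + 1 = (((j-i).val + 1 : ℕ) : ZMod n) := by
          conv_lhs => rw [← ZMod.natCast_zmod_val (j-i)]
          push_cast; ring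
        have he2 : i - j - 1 = -(j - i + 1) := by ring
        rcases Nat.lt_or_ge ((j-i).val + 1) n with h2 | h2
        · have hne2 : j - i + 1 ≠ 0 := by
            rw [he]
            intro h0
            have := congrArg ZMod.val h0
            rw [ZMod.val_natCast, Nat.mod_eq_of_lt h2, ZMod.val_zero] at this
            omega
          have hval : (j - i + 1).val = (j-i).val + 1 := by
            rw [he, ZMod.val_natCast, Nat.mod_eq_of_lt h2]
          rw [he2, val_neg_of_ne hne2, hval] at hp
          omega
        · have h3 : (j-i).val + 1 = n := by omega
          have h0 : j - i + 1 = 0 := by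
            rw [he, h3, ZMod.natCast_self]
          rw [he2, h0, neg_zero, ZMod.val_zero] at hp
          omega
    · -- w u
      have hv := ZMod.val_lt (j - i)
      rcases le_or_gt ((j - i).val) (n/2) with h | h
      · obtain ⟨p, hp⟩ := walk_wu2 hn2 i j
        have hd := SimpleGraph.dist_le p
        omega
      · rw [SimpleGraph.dist_comm]
        obtain ⟨p, hp⟩ := walk_uw hn2 j i
        have hd := SimpleGraph.dist_le p
        have hij : j - i ≠ 0 := by
          intro h0; rw [h0, ZMod.val_zero] at h; omega
        have he : i - j = -(j - i) := by ring
        rw [he, val_neg_of_ne hij] at hp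
        omega
    · -- w w
      have hij : j - i ≠ 0 := sub_ne_zero.mpr (fun h => hne (by rw [h]))
      have hv := ZMod.val_lt (j - i)
      have hv1 := val_pos_of_ne hij
      rcases le_or_gt ((j - i).val) (n/2) with h | h
      · obtain ⟨p, hp⟩ := walk_ww hn2 i j
        have hd := SimpleGraph.dist_le p
        rw [val_sub_one hij] at hp
        omega
      · rw [SimpleGraph.dist_comm]
        obtain ⟨p, hp⟩ := walk_ww hn2 j i
        have hd := SimpleGraph.dist_le p
        have hji : i - j ≠ 0 := by
          intro h0
          have : j - i = -(i - j) := by ring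
          rw [this, h0, neg_zero] at hij
          exact hij rfl
        have he : i - j = -(j - i) := by ring
        rw [val_sub_one hji, he, val_neg_of_ne hij] at hp
        omega

lemma cliqueNum_top_sun :
    (⊤ : SimpleGraph (ZMod n ⊕ ZMod n)).cliqueNum = 2*n := by
  classical
  have hcard : Fintype.card (ZMod n ⊕ ZMod n) = 2*n := by
    rw [Fintype.card_sum, ZMod.card]; omega
  apply le_antisymm
  · obtain ⟨s, hs⟩ := SimpleGraph.exists_isNClique_cliqueNum
      (G := (⊤ : SimpleGraph (ZMod n ⊕ ZMod n)))
    rw [← hs.card_eq]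
    calc s.card ≤ Finset.univ.card := Finset.card_le_univ s
      _ = 2*n := by rw [Finset.card_univ, hcard]
  · have hcl : (⊤ : SimpleGraph (ZMod n ⊕ ZMod n)).IsClique
        (Finset.univ : Finset (ZMod n ⊕ ZMod n)) := by
      intro x _ y _ hxy
      exact SimpleGraph.top_adj .. |>.mpr hxy
    have h1 := SimpleGraph.IsClique.card_le_cliqueNum (tc := hcl)
    rwa [Finset.card_univ, hcard] at h1

end top

/-- For the `n`-sun `G` (`n ≥ 3`) whose inner vertices induce a cycle:
for `1 ≤ r < ⌊n/2⌋` the clique number of `G^r` is `2r + 1`, and for every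
`r ≥ ⌊n/2⌋ + 1` the power `G^r` is the complete graph on the `2n` vertices,
so its clique number is `2n`. -/
theorem cliqueNum_power_cycleSunGraph (n : ℕ) (hn : 3 ≤ n) :
    (∀ r : ℕ, 1 ≤ r → r < n / 2 →
        ((cycleSunGraph n).power r).cliqueNum = 2 * r + 1) ∧
      (∀ r : ℕ, n / 2 + 1 ≤ r →
        (cycleSunGraph n).power r = ⊤ ∧ ((cycleSunGraph n).power r).cliqueNum = 2 * n) := by
  haveI : NeZero n := ⟨by omega⟩
  constructor
  · intro r hr1 hr2
    apply le_antisymm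
    · obtain ⟨s, hs⟩ := SimpleGraph.exists_isNClique_cliqueNum
        (G := (cycleSunGraph n).power r)
      rw [← hs.card_eq]
      exact clique_card_le hn hr2 hs.isClique
    · obtain ⟨s, hs⟩ := clique_lower hn hr1 hr2
      have h1 := SimpleGraph.IsClique.card_le_cliqueNum (tc := hs.isClique)
      rwa [hs.card_eq] at h1
  · intro r hr
    have ht := power_top (n := n) hn hr
    exact ⟨ht, by rw [ht]; exact cliqueNum_top_sun⟩
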